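/- Let (A,B) be a conic transition with ord(a) = q > p, p-rank(B) > p-rank(A), and ι(a) ∈ pB. Then ker(N : B → A) = B[p] (the kernel of the norm equals the socle of B), and p-rank(B) ≤ (p−1)·d, so the transition is terminal. -/

import Mathlib

/-- A *conic transition* `(A, B)` (Definition 2.4 of the paper): finite abelian
`p`-groups `A`, `B` which are cyclic `ℤ_p[T]`-modules (via commuting endomorphisms
`TA`, `TB` coming from the action of a cyclic `p`-group), with a surjective norm
`N : B → A`, an injective lift `ι : A → B` satisfying `N ∘ ι = p`, a distinguished-type
polynomial `ω ≡ T^d mod p` annihilating `A` with `ι ∘ N = ν(TB)` for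
`ν = ((ω+1)^p − 1)/ω = Σ_{i<p} (ω+1)^i`, kernel `ker N = ω·B`, and
`ω·x = 0 → x ∈ ι(A)`. -/
structure ConicTransition (p : ℕ) (A B : Type*) [AddCommGroup A] [AddCommGroup B] where
  hp : p.Prime
  N : B →+ A
  ι : A →+ B
  TA : AddMonoid.End A
  TB : AddMonoid.End B
  genA : A
  genB : B
  ω : Polynomial ℤ
  d : ℕ
  hNsurj : Function.Surjective N
  hιinj : Function.Injective ι
  hNι : ∀ x : A, N (ι x) = p • x
  hcommN : ∀ x : B, N (TB x) = TA (N x)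
  hcommι : ∀ x : A, ι (TA x) = TB (ι x)
  hTAnil : ∃ M : ℕ, TA ^ M = 0
  hTBnil : ∃ M : ℕ, TB ^ M = 0
  hgen : N genB = genA
  hcycA : ∀ x : A, ∃ f : Polynomial ℤ, x = Polynomial.aeval TA f genA
  hcycB : ∀ x : B, ∃ f : Polynomial ℤ, x = Polynomial.aeval TB f genB
  hωmonic : ω.Monic
  hωdeg : ω.natDegree = d
  hdpos : 0 < d
  hωmodp : ∀ i < d, (p : ℤ) ∣ ω.coeff i
  hω0 : ω.coeff 0 = 0
  hωA : ∀ x : A, Polynomial.aeval TA ω x = 0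
  hν : ∀ x : B, ι (N x) =
    Polynomial.aeval TB (∑ i ∈ Finset.range p, (ω + 1) ^ i) x
  hker : ∀ x : B, N x = 0 ↔ ∃ y : B, x = Polynomial.aeval TB ω y
  hωι : ∀ x : B, Polynomial.aeval TB ω x = 0 → ∃ a : A, x = ι a
  hpA : ∀ x : A, ∃ k : ℕ, p ^ k • x = 0
  hpB : ∀ x : B, ∃ k : ℕ, p ^ k • x = 0

open Polynomial
namespace Stmt17Aux
variable {A B : Type*} [AddCommGroup A] [AddCommGroup B]

lemma aeval_mul_apply (TB : AddMonoid.End B) (f g : ℤ[X]) (x : B) :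
    aeval TB (f * g) x = aeval TB f (aeval TB g x) := by rw [map_mul]; rfl

lemma aeval_add_apply (TB : AddMonoid.End B) (f g : ℤ[X]) (x : B) :
    aeval TB (f + g) x = aeval TB f x + aeval TB g x := by rw [map_add]; rfl

lemma aeval_sub_apply (TB : AddMonoid.End B) (f g : ℤ[X]) (x : B) :
    aeval TB (f - g) x = aeval TB f x - aeval TB g x := by rw [map_sub]; rfl

lemma aeval_X_apply (TB : AddMonoid.End B) (x : B) :
    aeval TB (X : ℤ[X]) x = TB x := by rw [aeval_X]

lemma aeval_X_pow_apply (TB : AddMonoid.End B) (n : ℕ) (x : B) :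
    aeval TB ((X : ℤ[X]) ^ n) x = (TB ^ n) x := by rw [map_pow, aeval_X]

lemma aeval_C_mul_apply (TB : AddMonoid.End B) (n : ℤ) (f : ℤ[X]) (x : B) :
    aeval TB (C n * f) x = n • aeval TB f x := by
  rw [map_mul, aeval_C]
  show ((algebraMap ℤ (AddMonoid.End B) n) * (aeval TB f)) x = _
  rw [algebraMap_int_eq, eq_intCast]
  show ((n : AddMonoid.End B) : B →+ B) (aeval TB f x) = _
  simp [AddMonoid.End.intCast_apply]

lemma aeval_comm_T (TB : AddMonoid.End B) (f : ℤ[X]) (x : B) :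
    aeval TB f (TB x) = TB (aeval TB f x) := by
  calc aeval TB f (TB x) = aeval TB (f * X) x := by rw [aeval_mul_apply, aeval_X]
    _ = aeval TB (X * f) x := by rw [mul_comm]
    _ = TB (aeval TB f x) := by rw [aeval_mul_apply, aeval_X]

lemma End_pow_succ_apply (TB : AddMonoid.End B) (n : ℕ) (x : B) :
    (TB ^ (n+1)) x = (TB ^ n) (TB x) := by rw [pow_succ]; rfl

/-- commuting homs commute with aeval -/
lemma comm_aeval (N : B →+ A) (TA : AddMonoid.End A) (TB : AddMonoid.End B)
    (h : ∀ x : B, N (TB x) = TA (N x)) (f : ℤ[X]) (x : B) :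
    N (aeval TB f x) = aeval TA f (N x) := by
  have hpow : ∀ (n : ℕ) (x : B), N ((TB ^ n) x) = (TA ^ n) (N x) := by
    intro n
    induction n with
    | zero => intro x; rfl
    | succ n ih => intro x; rw [End_pow_succ_apply, ih, h, ← End_pow_succ_apply]
  induction f using Polynomial.induction_on' with
  | add f g hf hg => rw [aeval_add_apply, map_add, hf, hg, aeval_add_apply]
  | monomial n c =>
      rw [← C_mul_X_pow_eq_monomial, aeval_C_mul_apply, aeval_C_mul_apply,
        aeval_X_pow_apply, aeval_X_pow_apply, map_zsmul, hpow]
lemma nakayama (p : ℕ) (TA : AddMonoid.End A) (M K : ℕ) (hM : TA ^ M = 0)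
    (hK : ∀ x : A, p ^ K • x = 0) (s a : A)
    (hcyc : ∀ x : A, ∃ f : ℤ[X], x = aeval TA f a)
    (h : ∃ (f : ℤ[X]) (y z : A), a = aeval TA f s + p • y + TA z) :
    ∀ x : A, ∃ f : ℤ[X], x = aeval TA f s := by
  have H : ∀ x : A, ∃ (f : ℤ[X]) (y z : A), x = aeval TA f s + p • y + TA z := by
    intro x
    obtain ⟨g, rfl⟩ := hcyc x
    obtain ⟨f, y, z, ha⟩ := h
    refine ⟨g * f, aeval TA g y, aeval TA g z, ?_⟩
    rw [ha, map_add, map_add, ← aeval_mul_apply, map_nsmul, aeval_comm_T]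
  have H1 : ∀ (j : ℕ) (x : A), ∃ (f : ℤ[X]) (y z : A),
      x = aeval TA f s + p • y + (TA ^ j) z := by
    intro j
    induction j with
    | zero => intro x; exact ⟨0, 0, x, by simp⟩
    | succ j ih =>
      intro x
      obtain ⟨f, y, z, hx⟩ := ih x
      obtain ⟨f', y', z', hz⟩ := H z
      refine ⟨f + X ^ j * f', y + (TA ^ j) y', z', ?_⟩
      rw [hx, hz, map_add, map_add, map_nsmul, aeval_add_apply,
        aeval_mul_apply, aeval_X_pow_apply, ← End_pow_succ_apply, smul_add]
      abel
  have H2 : ∀ x : A, ∃ (f : ℤ[X]) (y : A), x = aeval TA f s + p • y := by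
    intro x
    obtain ⟨f, y, z, hx⟩ := H1 M x
    exact ⟨f, y, by rw [hx, hM]; simp⟩
  have H3 : ∀ (k : ℕ) (x : A), ∃ (f : ℤ[X]) (y : A), x = aeval TA f s + p ^ k • y := by
    intro k
    induction k with
    | zero => intro x; exact ⟨0, x, by simp⟩
    | succ k ih =>
      intro x
      obtain ⟨f, y, hx⟩ := ih x
      obtain ⟨f', y', hy⟩ := H2 y
      refine ⟨f + C ((p:ℤ)^k) * f', y', ?_⟩
      rw [hx, hy, aeval_add_apply, aeval_C_mul_apply, smul_add]
      have h1 : (p:ℕ)^k • aeval TA f' s = ((p:ℤ)^k) • aeval TA f' s := by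
        rw [← natCast_zsmul]; norm_cast
      have h2 : (p:ℕ)^k • (p • y') = p^(k+1) • y' := by
        rw [← mul_nsmul', ← pow_succ]
      rw [h1, h2]; abel
  intro x
  obtain ⟨f, y, hx⟩ := H3 K x
  exact ⟨f, by rw [hx, hK]; simp⟩

lemma unif (p : ℕ) (hp : p.Prime) [Fintype A] (h : ∀ x : A, ∃ k : ℕ, p ^ k • x = 0) :
    ∃ K : ℕ, ∀ x : A, p ^ K • x = 0 := by
  refine ⟨Fintype.card A, fun x => ?_⟩
  obtain ⟨k, hk⟩ := h x
  obtain ⟨j, _, hx⟩ := (Nat.dvd_prime_pow hp).mp (addOrderOf_dvd_of_nsmul_eq_zero hk)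
  have hj : j ≤ Fintype.card A := by
    refine le_of_lt ?_
    calc j < p ^ j := Nat.lt_pow_self hp.one_lt
      _ = addOrderOf x := hx.symm
      _ ≤ Fintype.card A := addOrderOf_le_card_univ
  have hz : p ^ j • x = 0 := by rw [← hx]; exact addOrderOf_nsmul_eq_zero x
  calc p ^ Fintype.card A • x = (p ^ j * p ^ (Fintype.card A - j)) • x := by
        rw [← pow_add, Nat.add_sub_cancel' hj]
    _ = p ^ (Fintype.card A - j) • (p ^ j • x) := mul_nsmul x _ _
    _ = 0 := by rw [hz, smul_zero]

lemma modp (p : ℕ) [NeZero p] (q : ℤ[X])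
    (h : q.map (Int.castRingHom (ZMod p)) = 0) : ∃ g : ℤ[X], q = C (p:ℤ) * g := by
  have : ∀ i, (p:ℤ) ∣ q.coeff i := by
    intro i
    have h2 := congrArg (fun r => Polynomial.coeff r i) h
    simp only [coeff_map, coeff_zero] at h2
    exact (ZMod.intCast_zmod_eq_zero_iff_dvd _ _).mp (by exact_mod_cast h2)
  exact (C_dvd_iff_dvd_coeff _ _).mpr this
end Stmt17Aux

open Stmt17Aux in
theorem stmt_17 (p : ℕ) (A B : Type*) [AddCommGroup A] [AddCommGroup B]
    [Fintype A] [Fintype B] (ct : ConicTransition p A B)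
    (hq : p < addOrderOf ct.genA)
    (rA rB : ℕ)
    (hrA : Nat.card (A ⧸ (p • AddMonoidHom.id A).range) = p ^ rA)
    (hrB : Nat.card (B ⧸ (p • AddMonoidHom.id B).range) = p ^ rB)
    (hlt : rA < rB)
    (hιa : ct.ι ct.genA ∈ (p • AddMonoidHom.id B).range) :
    (∀ x : B, ct.N x = 0 ↔ p • x = 0) ∧ rB ≤ (p - 1) * ct.d := by
  obtain ⟨hp, N, ι, TA, TB, a, b, ω, d, hNsurj, hιinj, hNι, hcommN, hcommι, hTAnil,
    hTBnil, hgen, hcycA, hcycB, hωmonic, hωdeg, hdpos, hωmodp, hω0, hωA, hν, hker,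
    hωι, hpA, hpB⟩ := ct
  simp only at hq hιa ⊢
  have hp2 : 1 < p := hp.one_lt
  haveI : NeZero p := ⟨hp.ne_zero⟩
  have commN : ∀ (f : Polynomial ℤ) (x : B), N (aeval TB f x) = aeval TA f (N x) :=
    comm_aeval N TA TB hcommN
  have commι : ∀ (f : Polynomial ℤ) (x : A), ι (aeval TA f x) = aeval TB f (ι x) :=
    comm_aeval ι TB TA hcommι
  obtain ⟨MA, hMA⟩ := hTAnil
  obtain ⟨MB, hMB⟩ := hTBnil
  obtain ⟨KA, hKA⟩ := unif p hp hpA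
  obtain ⟨KB, hKB⟩ := unif p hp hpB
  -- the element c with p • c = ι a
  obtain ⟨c, hc⟩ := hιa
  have hc : p • c = ι a := by
    simpa using hc
  have aeval_C_apply : ∀ (T : AddMonoid.End A) (n : ℤ) (x : A), aeval T (C n) x = n • x := by
    intro T n x
    have h1 : (C n : Polynomial ℤ) = C n * 1 := by ring
    rw [h1, aeval_C_mul_apply, map_one]
    rfl
  have hpt : p • (N c - a) = 0 := by
    rw [smul_sub, ← map_nsmul, hc, hNι, sub_self]
  -- Step A : N c generates A
  have hNc : ∀ x : A, ∃ f : Polynomial ℤ, x = aeval TA f (N c) := by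
    obtain ⟨h, ht⟩ := hcycA (N c - a)
    set m : ℤ := h.coeff 0 with hm
    set w : A := aeval TA h.divX a with hw
    have ht2 : N c - a = m • a + TA w := by
      rw [ht]
      conv_lhs => rw [← X_mul_divX_add h]
      rw [aeval_add_apply, aeval_mul_apply, aeval_X_apply, aeval_C_apply, add_comm]
    by_cases hpm : (p:ℤ) ∣ m
    · obtain ⟨m', hm'⟩ := hpm
      apply nakayama p TA MA KA hMA hKA (N c) a hcycA
      refine ⟨1, -(m' • a), -w, ?_⟩
      have e0 : aeval TA (1 : Polynomial ℤ) (N c) = N c := by rw [map_one]; rfl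
      have e1 : m • a = p • (m' • a) := by rw [hm', mul_smul, natCast_zsmul]
      have e2 : N c = m • a + TA w + a := sub_eq_iff_eq_add.mp ht2
      rw [e0, e2, e1, smul_neg, map_neg]
      abel
    · have hmn : ¬ ((p:ℕ) ∣ m.natAbs) := fun hd => hpm (Int.natCast_dvd_natCast.mpr hd |>.trans (Int.natAbs_dvd.mpr dvd_rfl))
      have hcop : IsCoprime (p:ℤ) m := by
        rw [Int.isCoprime_iff_gcd_eq_one]
        have := (hp.coprime_iff_not_dvd).mpr hmn
        simpa [Int.gcd, Int.natAbs_natCast] using this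
      obtain ⟨v, u, huv⟩ := hcop
      exfalso
      have hRt : ∀ x : A, ∃ f : Polynomial ℤ, x = aeval TA f (N c - a) := by
        apply nakayama p TA MA KA hMA hKA (N c - a) a hcycA
        refine ⟨C u, v • a, -(u • w), ?_⟩
        have e3 : aeval TA (C u) (N c - a) = u • (m • a + TA w) := by
          rw [aeval_C_apply, ht2]
        rw [e3, map_neg, map_zsmul, smul_add, smul_smul]
        have e4 : (u * m) • a = a - p • (v • a) := by
          have h5 : u * m = 1 - v * p := by linarith [huv]
          rw [h5, sub_smul, one_smul, mul_comm, mul_smul, natCast_zsmul]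
        rw [e4]
        abel
      obtain ⟨g, hg⟩ := hRt a
      have hpa : p • a = 0 := by rw [hg, ← map_nsmul, hpt, map_zero]
      have := Nat.le_of_dvd hp.pos (addOrderOf_dvd_of_nsmul_eq_zero hpa)
      omega
  -- Step B : decomposition B = ℤ[T]c + ker N
  have decomp : ∀ x : B, ∃ (f : Polynomial ℤ) (k : B),
      x = aeval TB f c + k ∧ N k = 0 := by
    intro x
    obtain ⟨g, hg⟩ := hNc (N x)
    refine ⟨g, x - aeval TB g c, by abel, ?_⟩
    rw [map_sub, commN, ← hg, sub_self]
  -- mod p reduction of ω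
  have hmapω : ω.map (Int.castRingHom (ZMod p)) = Polynomial.X ^ d := by
    have hdvd : ∀ i, (p:ℤ) ∣ (ω - X ^ d).coeff i := by
      intro i
      rcases lt_trichotomy i d with hi | rfl | hi
      · rw [coeff_sub, coeff_X_pow, if_neg (by omega)]
        simpa using hωmodp i hi
      · rw [coeff_sub, coeff_X_pow, if_pos rfl]
        have h1 : ω.coeff i = 1 := by
          have := hωmonic.coeff_natDegree
          rwa [hωdeg] at this
        simp [h1]
      · rw [coeff_sub, coeff_X_pow, if_neg (by omega)]
        have h1 : ω.coeff i = 0 := coeff_eq_zero_of_natDegree_lt (by omega)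
        simp [h1]
    have h0 : (ω - X ^ d).map (Int.castRingHom (ZMod p)) = 0 := by
      ext i
      rw [coeff_map, coeff_zero]
      have := (ZMod.intCast_zmod_eq_zero_iff_dvd _ p).mpr (hdvd i)
      exact_mod_cast this
    rw [Polynomial.map_sub, sub_eq_zero] at h0
    rw [h0, Polynomial.map_pow, map_X]
  -- nilpotency of ω on B
  obtain ⟨Mω, hMω⟩ : ∃ M : ℕ, ∀ y : B, aeval TB (ω ^ M) y = 0 := by
    obtain ⟨g, hg⟩ := modp p (ω ^ MB - X ^ (d * MB)) (by
      rw [Polynomial.map_sub, Polynomial.map_pow, Polynomial.map_pow, map_X, hmapω,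
        ← pow_mul, sub_self])
    have hstep : ∀ y : B, aeval TB (ω ^ MB) y = p • aeval TB g y := by
      intro y
      have h1 : (ω ^ MB : Polynomial ℤ) = X ^ (d * MB) + C (p:ℤ) * g := by
        rw [← hg]; ring
      rw [h1, aeval_add_apply, aeval_X_pow_apply, aeval_C_mul_apply]
      have h2 : (TB ^ (d * MB)) = 0 := by
        have h3 : d * MB = (d * MB - MB) + MB := by
          have : MB ≤ d * MB := Nat.le_mul_of_pos_left MB hdpos
          omega
        rw [h3, pow_add, hMB, mul_zero]
      rw [h2, natCast_zsmul]
      simp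
    have hiter : ∀ (k : ℕ) (y : B), ∃ z : B, aeval TB (ω ^ (MB * k)) y = p ^ k • z := by
      intro k
      induction k with
      | zero =>
        intro y
        refine ⟨y, ?_⟩
        rw [Nat.mul_zero, pow_zero, map_one, pow_zero, one_smul]
        rfl
      | succ k ih =>
        intro y
        obtain ⟨z, hz⟩ := ih (aeval TB g y)
        refine ⟨z, ?_⟩
        have h3 : (ω ^ (MB * (k+1)) : Polynomial ℤ) = ω ^ (MB * k) * ω ^ MB := by
          rw [Nat.mul_succ, pow_add]
        rw [h3, aeval_mul_apply, hstep y, map_nsmul, hz, ← mul_nsmul', ← pow_succ']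
    refine ⟨MB * KB, fun y => ?_⟩
    obtain ⟨z, hz⟩ := hiter KB y
    rw [hz, hKB]
  -- Step C : p kills ω^m B for m ≥ 1
  have Dlem : ∀ m : ℕ, 1 ≤ m → ∀ y : B, p • aeval TB (ω ^ m) y = 0 := by
    have key : ∀ (j m : ℕ), 1 ≤ m → Mω ≤ m + j → ∀ y : B, p • aeval TB (ω ^ m) y = 0 := by
      intro j
      induction j with
      | zero =>
        intro m hm hle y
        have h1 : (ω ^ m : Polynomial ℤ) = ω ^ Mω * ω ^ (m - Mω) := by
          rw [← pow_add]
          congr 1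
          omega
        rw [h1, aeval_mul_apply, hMω, smul_zero]
      | succ j ih =>
        intro m hm hle y
        obtain ⟨f, k, rfl, hk⟩ := decomp y
        obtain ⟨y', rfl⟩ := (hker k).mp hk
        rw [map_add, smul_add]
        have hA : p • aeval TB (ω ^ m) (aeval TB f c) = 0 := by
          obtain ⟨m', rfl⟩ : ∃ m', m = m' + 1 := ⟨m - 1, by omega⟩
          rw [← aeval_mul_apply, ← map_nsmul, hc, ← commι]
          have h2 : (ω ^ (m'+1) * f : Polynomial ℤ) = (ω ^ m' * f) * ω := by ring
          rw [h2, aeval_mul_apply, hωA, map_zero, map_zero]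
        have hB : p • aeval TB (ω ^ m) (aeval TB ω y') = 0 := by
          rw [← aeval_mul_apply, ← pow_succ]
          exact ih (m+1) (by omega) (by omega) y'
        rw [hA, hB, add_zero]
    intro m hm y
    exact key Mω m hm (by omega) y
  have Dlem1 : ∀ y : B, p • aeval TB ω y = 0 := by
    intro y
    have := Dlem 1 le_rfl y
    rwa [pow_one] at this
  have kerp : ∀ x : B, N x = 0 → p • x = 0 := by
    intro x hx
    obtain ⟨y, rfl⟩ := (hker x).mp hx
    exact Dlem1 y
  -- Step D : pB = ι(A)
  have hpB_sub : ∀ x : B, ∃ α : A, p • x = ι α := by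
    intro x
    obtain ⟨f, k, rfl, hk⟩ := decomp x
    refine ⟨aeval TA f a, ?_⟩
    rw [smul_add, kerp k hk, add_zero, ← map_nsmul, hc, commι]
  have hι_sub : ∀ α : A, ∃ x : B, ι α = p • x := by
    intro α
    obtain ⟨f, rfl⟩ := hcycA α
    refine ⟨aeval TB f c, ?_⟩
    rw [commι, ← hc, map_nsmul]
  -- Step E : counting gives ker N = B[p]
  set Pm : B →+ B := p • AddMonoidHom.id B with hPm
  have hPmApply : ∀ x : B, Pm x = p • x := fun x => by simp [hPm]
  have hrange : Pm.range = ι.range := by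
    ext x
    simp only [AddMonoidHom.mem_range]
    constructor
    · rintro ⟨y, rfl⟩
      obtain ⟨α, hα⟩ := hpB_sub y
      exact ⟨α, by rw [hPmApply, hα]⟩
    · rintro ⟨α, rfl⟩
      obtain ⟨x', hx'⟩ := hι_sub α
      exact ⟨x', by rw [hPmApply, ← hx']⟩
  have cardA : Nat.card ι.range = Nat.card A :=
    (Nat.card_congr (AddMonoidHom.ofInjective hιinj).toEquiv).symm
  have cardNq : Nat.card (B ⧸ N.ker) = Nat.card A :=
    Nat.card_congr (QuotientAddGroup.quotientKerEquivOfSurjective N hNsurj).toEquiv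
  have cardPq : Nat.card (B ⧸ Pm.ker) = Nat.card A := by
    rw [Nat.card_congr (QuotientAddGroup.quotientKerEquivRange Pm).toEquiv, hrange, cardA]
  have hApos : 0 < Nat.card A := Nat.card_pos
  have e1 : Nat.card B = p ^ rB * Nat.card A := by
    rw [AddSubgroup.card_eq_card_quotient_mul_card_addSubgroup Pm.range, hrB, hrange, cardA]
  have e3 : Nat.card B = Nat.card A * Nat.card N.ker := by
    rw [AddSubgroup.card_eq_card_quotient_mul_card_addSubgroup N.ker, cardNq]
  have e4 : Nat.card B = Nat.card A * Nat.card Pm.ker := by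
    rw [AddSubgroup.card_eq_card_quotient_mul_card_addSubgroup Pm.ker, cardPq]
  have hkerN : Nat.card N.ker = p ^ rB := by
    have := e1.symm.trans e3
    rw [mul_comm (Nat.card A) _] at this
    exact (Nat.eq_of_mul_eq_mul_right hApos this).symm
  have hkerP : Nat.card Pm.ker = p ^ rB := by
    have := e1.symm.trans e4
    rw [mul_comm (Nat.card A) _] at this
    exact (Nat.eq_of_mul_eq_mul_right hApos this).symm
  have hle : N.ker ≤ Pm.ker := by
    intro x hx
    rw [AddMonoidHom.mem_ker] at hx ⊢
    rw [hPmApply]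
    exact kerp x hx
  have heq : N.ker = Pm.ker := by
    apply SetLike.coe_injective
    apply Set.eq_of_subset_of_ncard_le hle ?_ (Set.toFinite _)
    rw [← Nat.card_coe_set_eq, ← Nat.card_coe_set_eq]
    show Nat.card Pm.ker ≤ Nat.card N.ker
    rw [hkerN, hkerP]
  have goal1 : ∀ x : B, N x = 0 ↔ p • x = 0 := by
    intro x
    have h1 := SetLike.ext_iff.mp heq x
    simpa [AddMonoidHom.mem_ker, hPmApply] using h1
  refine ⟨goal1, ?_⟩
  -- Step F : rank bound
  have pωb : p • aeval TB ω b = 0 := Dlem1 b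
  have hgeom : ((∑ i ∈ Finset.range p, (ω + 1) ^ i) * ω : Polynomial ℤ) = (ω + 1) ^ p - 1 := by
    have h1 := geom_sum_mul (ω + 1 : Polynomial ℤ) p
    simpa using h1
  have hωpow : ∀ x : B, aeval TB ((ω + 1) ^ p) x = x := by
    intro x
    have h1 : aeval TB ((ω + 1) ^ p - 1) x = 0 := by
      rw [← hgeom, mul_comm, aeval_mul_apply, ← hν, ← commι, hωA, map_zero]
    rw [aeval_sub_apply, map_one, sub_eq_zero] at h1
    exact h1
  have hqY : ∃ g₂ : Polynomial ℤ,
      ((X + 1 : Polynomial ℤ) ^ p - 1 - X ^ p) = C (p:ℤ) * (X * g₂) := by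
    haveI : Fact p.Prime := ⟨hp⟩
    obtain ⟨g₁, hg₁⟩ := modp p ((X + 1 : Polynomial ℤ) ^ p - 1 - X ^ p) (by
      rw [Polynomial.map_sub, Polynomial.map_sub, Polynomial.map_pow, Polynomial.map_pow,
        Polynomial.map_add, map_X, Polynomial.map_one, add_pow_char]
      ring)
    have h1 : ((X + 1 : Polynomial ℤ) ^ p - 1 - X ^ p).coeff 0 = 0 := by
      rw [coeff_sub, coeff_sub, coeff_zero_eq_eval_zero, coeff_zero_eq_eval_zero,
        coeff_zero_eq_eval_zero]
      simp [zero_pow hp.ne_zero]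
    have h2 : g₁.coeff 0 = 0 := by
      have h3 := congrArg (fun q => Polynomial.coeff q 0) hg₁
      simp only [coeff_C_mul] at h3
      rw [h1] at h3
      have hpne : (p:ℤ) ≠ 0 := by exact_mod_cast hp.ne_zero
      exact (mul_eq_zero.mp h3.symm).resolve_left hpne
    obtain ⟨g₂, hg₂⟩ := X_dvd_iff.mpr h2
    exact ⟨g₂, by rw [hg₁, hg₂]⟩
  obtain ⟨g₂, hg₂⟩ := hqY
  have hcomp : ((ω + 1) ^ p - 1 - ω ^ p : Polynomial ℤ) = C (p:ℤ) * (ω * g₂.comp ω) := by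
    have h3 := congrArg (fun q => Polynomial.comp q ω) hg₂
    simpa using h3
  have hωpb : aeval TB (ω ^ p) b = 0 := by
    have h3 : aeval TB ((ω + 1) ^ p - 1 - ω ^ p) b = - aeval TB (ω ^ p) b := by
      rw [aeval_sub_apply, aeval_sub_apply, map_one, hωpow b]
      have : (1 : AddMonoid.End B) b = b := rfl
      rw [this]
      abel
    have h4 : aeval TB (C (p:ℤ) * (ω * g₂.comp ω)) b = 0 := by
      rw [aeval_C_mul_apply, natCast_zsmul, aeval_mul_apply]
      exact Dlem1 _
    rw [hcomp, h4] at h3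
    exact (neg_eq_zero.mp h3.symm)
  set n : ℕ := (p - 1) * d with hn0
  have hnpos : 0 < n := Nat.mul_pos (by omega) hdpos
  obtain ⟨h, hh⟩ := modp p (ω ^ (p-1) - X ^ n) (by
    rw [Polynomial.map_sub, Polynomial.map_pow, Polynomial.map_pow, map_X, hmapω,
      ← pow_mul, hn0, mul_comm, sub_self])
  have hTn : (TB ^ n) (aeval TB ω b) = 0 := by
    have h1 : ((X : Polynomial ℤ) ^ n) = ω ^ (p-1) - C (p:ℤ) * h := by
      rw [← hh]; ring
    rw [← aeval_X_pow_apply, h1, aeval_sub_apply]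
    have h2 : aeval TB (ω ^ (p-1)) (aeval TB ω b) = 0 := by
      rw [← aeval_mul_apply, ← pow_succ]
      have h3 : p - 1 + 1 = p := by omega
      rw [h3, hωpb]
    have h4 : aeval TB (C (p:ℤ) * h) (aeval TB ω b) = 0 := by
      rw [aeval_C_mul_apply, natCast_zsmul, ← map_nsmul, pωb, map_zero]
    rw [h2, h4, sub_zero]
  set u : ℕ → B := fun i => (TB ^ i) (aeval TB ω b) with hu
  have hun : ∀ i, n ≤ i → u i = 0 := by
    intro i hi
    have h1 : (TB : AddMonoid.End B) ^ i = TB ^ (i - n) * TB ^ n := by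
      rw [← pow_add]
      congr 1
      omega
    show (TB ^ i) (aeval TB ω b) = 0
    rw [h1]
    show (TB ^ (i - n)) ((TB ^ n) (aeval TB ω b)) = 0
    rw [hTn, map_zero]
  have hpu : ∀ i, p • u i = 0 := fun i => by
    show p • (TB ^ i) (aeval TB ω b) = 0
    rw [← map_nsmul, pωb, map_zero]
  set ψ : (Fin n → Fin p) → B := fun v => ∑ i : Fin n, ((v i : ℕ) : ℤ) • u (i : ℕ) with hψ
  have hcover : ∀ x : B, N x = 0 → ∃ v, ψ v = x := by
    intro x hx
    obtain ⟨y, rfl⟩ := (hker x).mp hx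
    obtain ⟨g, rfl⟩ := hcycB y
    have hswap : aeval TB ω (aeval TB g b) = aeval TB g (aeval TB ω b) := by
      rw [← aeval_mul_apply, mul_comm, aeval_mul_apply]
    set r := g %ₘ (X ^ n) with hr
    have hdeg : r.natDegree < n := by
      by_cases hr0 : r = 0
      · rw [hr0]
        simpa using hnpos
      · have h5 := degree_modByMonic_lt g (monic_X_pow n (R := ℤ))
        rw [natDegree_lt_iff_degree_lt hr0]
        simpa [degree_X_pow] using h5
    have hsplit : aeval TB g (aeval TB ω b) = aeval TB r (aeval TB ω b) := by
      conv_lhs => rw [← modByMonic_add_div g (X ^ n : ℤ[X])]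
      rw [aeval_add_apply, ← hr]
      have h6 : aeval TB (X ^ n * (g /ₘ X ^ n)) (aeval TB ω b) = 0 := by
        rw [mul_comm, aeval_mul_apply, aeval_X_pow_apply, hTn, map_zero]
      rw [h6, add_zero]
    have hexp : aeval TB r (aeval TB ω b) = ∑ i ∈ Finset.range n, r.coeff i • u i := by
      rw [Polynomial.aeval_eq_sum_range' hdeg TB]; erw [AddMonoidHom.finset_sum_apply]
      refine Finset.sum_congr rfl fun i _ => ?_
      exact AddMonoidHom.smul_apply _ _ _
    have hpne : (0:ℤ) < (p:ℤ) := by exact_mod_cast hp.pos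
    refine ⟨fun i => ⟨((r.coeff (i:ℕ)) % p).toNat, ?_⟩, ?_⟩
    · have h8 : 0 ≤ (r.coeff (i:ℕ)) % p := Int.emod_nonneg _ (ne_of_gt hpne)
      have h9 : (r.coeff (i:ℕ)) % p < p := Int.emod_lt_of_pos _ hpne
      omega
    · rw [hψ, hswap, hsplit, hexp, ← Fin.sum_univ_eq_sum_range (fun i => r.coeff i • u i) n]
      refine Finset.sum_congr rfl fun i _ => ?_
      have h8 : 0 ≤ (r.coeff (i:ℕ)) % p := Int.emod_nonneg _ (ne_of_gt hpne)
      have h9 : ((((r.coeff (i:ℕ)) % p).toNat : ℕ) : ℤ) = (r.coeff (i:ℕ)) % p :=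
        Int.toNat_of_nonneg h8
      rw [h9]
      conv_rhs => rw [← Int.mul_ediv_add_emod (r.coeff (i:ℕ)) p]
      rw [add_smul, mul_comm ((p:ℤ)) _, mul_smul, natCast_zsmul, hpu, smul_zero, zero_add]
  have hsub : ((N.ker : Set B)) ⊆ Set.range ψ := by
    intro x hx
    obtain ⟨v, hv⟩ := hcover x (AddMonoidHom.mem_ker.mp hx)
    exact ⟨v, hv⟩
  have hcard1 : Nat.card N.ker ≤ p ^ n :=
    calc Nat.card N.ker ≤ Nat.card (Set.range ψ) := Nat.card_mono (Set.toFinite _) hsub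
      _ ≤ Nat.card (Fin n → Fin p) := Finite.card_range_le ψ
      _ = p ^ n := by rw [Nat.card_fun]; simp
  rw [hkerN] at hcard1
  exact (Nat.pow_le_pow_iff_right hp2).mp hcard1
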